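/- Let ρ be an n×n complex positive semidefinite Hermitian matrix with trace 1, let Λ be an n×n Hermitian matrix, and set D = (ρΛ + Λρ)/2. Assume tr D = 0. Then for every n×n Hermitian matrix O, the real numbers tr(DO), tr(ρO), tr(ρO²), tr(ρΛ²) satisfy (tr(DO))² ≤ (tr(ρO²) − (tr(ρO))²) · tr(ρΛ²). (In words: the signal-to-noise ratio of any observable is bounded by the quantum Fisher information tr(ρΛ²).) -/

import Mathlib

open scoped ComplexOrder

open Matrix

/-- The real part of the trace of a PSD complex matrix is nonnegative. -/
lemma psd_trace_re_nonneg {n : ℕ} {M : Matrix (Fin n) (Fin n) ℂ}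
    (hM : M.PosSemidef) : 0 ≤ M.trace.re := by
  have h : ∀ i, 0 ≤ (M i i).re := by
    intro i
    have := hM.re_dotProduct_nonneg (Pi.single i 1)
    simpa [dotProduct, mulVec, Pi.single_apply] using this
  rw [Matrix.trace, Complex.re_sum]
  exact Finset.sum_nonneg fun i _ => h i

open scoped MatrixOrder in
/-- For PSD `ρ` and Hermitian `H`, `tr (ρ H H)` has nonnegative real part. -/
lemma trace_rho_sq_nonneg {n : ℕ} {ρ : Matrix (Fin n) (Fin n) ℂ} (hρ : ρ.PosSemidef)
    {H : Matrix (Fin n) (Fin n) ℂ} (hH : H.IsHermitian) :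
    0 ≤ (ρ * (H * H)).trace.re := by
  set s := CFC.sqrt ρ with hs
  have hss : s * s = ρ := CFC.sqrt_mul_sqrt_self ρ hρ.nonneg
  have hsh : s.IsHermitian := (CFC.sqrt_nonneg ρ).posSemidef.isHermitian
  have e1 : ρ * (H * H) = s * (s * H * H) := by rw [← hss]; noncomm_ring
  have e2 : (H * s)ᴴ * (H * s) = s * H * H * s := by
    rw [conjTranspose_mul, hsh.eq, hH.eq]; noncomm_ring
  have key : (ρ * (H * H)).trace = ((H * s)ᴴ * (H * s)).trace := by
    rw [e1, Matrix.trace_mul_comm, e2]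
  rw [key]
  exact psd_trace_re_nonneg (posSemidef_conjTranspose_mul_self (H * s))

/-- `star (tr (A * B)) = tr (B * A)` when `A`, `B` are Hermitian. -/
lemma star_trace_mul {n : ℕ} {A B : Matrix (Fin n) (Fin n) ℂ}
    (hA : A.IsHermitian) (hB : B.IsHermitian) :
    star ((A * B).trace) = (B * A).trace := by
  rw [← Matrix.trace_conjTranspose, conjTranspose_mul, hA.eq, hB.eq]

/-- `star (tr (A (B C))) = tr (A (C B))` for Hermitian `A`, `B`, `C`. -/
lemma star_trace_mul3 {n : ℕ} {A B C : Matrix (Fin n) (Fin n) ℂ}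
    (hA : A.IsHermitian) (hB : B.IsHermitian) (hC : C.IsHermitian) :
    star ((A * (B * C)).trace) = (A * (C * B)).trace := by
  rw [← Matrix.trace_conjTranspose,
    show (A * (B * C))ᴴ = C * B * A by
      simp [conjTranspose_mul, hA.eq, hB.eq, hC.eq, Matrix.mul_assoc],
    Matrix.trace_mul_comm]

/-- For a density matrix `ρ` with symmetric logarithmic derivative `Λ` (i.e.
`D = (ρΛ + Λρ)/2` with `tr D = 0`), the signal-to-noise ratio of any Hermitian
observable `O` is bounded by the quantum Fisher information `tr(ρΛ²)`. -/
theorem snr_le_qfi {n : ℕ} (ρ Λ D : Matrix (Fin n) (Fin n) ℂ)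
    (hρ : ρ.PosSemidef) (hρtr : ρ.trace = 1) (hΛ : Λ.IsHermitian)
    (hDdef : D = (1 / 2 : ℂ) • (ρ * Λ + Λ * ρ)) (hDtr : D.trace = 0) :
    ∀ O : Matrix (Fin n) (Fin n) ℂ, O.IsHermitian →
      ((D * O).trace.re) ^ 2 ≤
        ((ρ * O ^ 2).trace.re - ((ρ * O).trace.re) ^ 2) * (ρ * Λ ^ 2).trace.re := by
  intro O hO
  -- `tr(ρΛ) = 0` since `tr D = 0`
  have hρΛ : (ρ * Λ).trace = 0 := by
    have h1 : (Λ * ρ).trace = (ρ * Λ).trace := Matrix.trace_mul_comm Λ ρ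
    have : D.trace = (ρ * Λ).trace := by
      rw [hDdef, Matrix.trace_smul, Matrix.trace_add, h1, smul_eq_mul]
      ring
    rw [← this, hDtr]
  -- `tr(ρO)` is real
  set μ : ℂ := (ρ * O).trace with hμdef
  have hμreal : (starRingEnd ℂ) μ = μ := by
    have := star_trace_mul hρ.isHermitian hO
    rw [Matrix.trace_mul_comm O ρ] at this
    exact this
  have hμ : μ = (μ.re : ℂ) := (Complex.conj_eq_iff_re.mp hμreal).symm
  -- centered observable
  set O' : Matrix (Fin n) (Fin n) ℂ := O - μ • 1 with hO'def
  have hO' : O'.IsHermitian := by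
    rw [hO'def, Matrix.IsHermitian, conjTranspose_sub, conjTranspose_smul,
      conjTranspose_one, hO.eq]
    congr 1
    rw [Complex.star_def, hμreal]
  -- the three real coefficients
  set A : ℝ := (ρ * (O' * O')).trace.re with hA
  set B : ℝ := (ρ * (Λ * O')).trace.re with hB
  set C : ℝ := (ρ * (Λ * Λ)).trace.re with hC
  -- cross-term realness: re tr(ρ(O'Λ)) = re tr(ρ(ΛO'))
  have hcross : (ρ * (O' * Λ)).trace.re = B := by
    have h1 := star_trace_mul3 hρ.isHermitian hΛ hO'
    have := congrArg Complex.re h1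
    simpa [Complex.star_def] using this.symm
  -- the quadratic is nonnegative
  have hquad : ∀ t : ℝ, 0 ≤ C * (t * t) + (2 * B) * t + A := by
    intro t
    have hherm : (O' + (t : ℂ) • Λ).IsHermitian := by
      rw [Matrix.IsHermitian, conjTranspose_add, conjTranspose_smul, hO'.eq, hΛ.eq]
      congr 1
      norm_num
    have hnn := trace_rho_sq_nonneg hρ hherm
    have hexp : (ρ * ((O' + (t : ℂ) • Λ) * (O' + (t : ℂ) • Λ))).trace
        = (ρ * (O' * O')).trace + (t : ℂ) * ((ρ * (O' * Λ)).trace + (ρ * (Λ * O')).trace)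
          + (t : ℂ) ^ 2 * (ρ * (Λ * Λ)).trace := by
      rw [show (O' + (t : ℂ) • Λ) * (O' + (t : ℂ) • Λ)
          = O' * O' + (t : ℂ) • (O' * Λ) + (t : ℂ) • (Λ * O') + ((t : ℂ) ^ 2) • (Λ * Λ) by
        simp only [add_mul, mul_add, Matrix.smul_mul, Matrix.mul_smul, smul_smul, sq]
        abel]
      simp only [Matrix.mul_add, Matrix.mul_smul, Matrix.trace_add, Matrix.trace_smul,
        smul_eq_mul]
      ring
    rw [hexp] at hnn
    have hre : ((ρ * (O' * O')).trace + (t : ℂ) * ((ρ * (O' * Λ)).trace + (ρ * (Λ * O')).trace)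
          + (t : ℂ) ^ 2 * (ρ * (Λ * Λ)).trace).re
        = A + t * ((ρ * (O' * Λ)).trace.re + B) + t ^ 2 * C := by
      simp [Complex.add_re, Complex.mul_re, Complex.ofReal_re, Complex.ofReal_im, pow_two, hA, hB, hC]
    rw [hre, hcross] at hnn
    nlinarith [hnn]
  -- Cauchy–Schwarz via the discriminant
  have hdisc : discrim C (2 * B) A ≤ 0 := discrim_le_zero hquad
  rw [discrim] at hdisc
  have hBsq : B ^ 2 ≤ A * C := by nlinarith
  -- identify B with tr(DO).re
  have hΛO' : (ρ * (Λ * O')).trace = (ρ * (Λ * O)).trace := by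
    rw [hO'def,
      show Λ * (O - μ • 1) = Λ * O - μ • Λ by simp [Matrix.mul_sub, Matrix.mul_smul],
      show ρ * (Λ * O - μ • Λ) = ρ * (Λ * O) - μ • (ρ * Λ) by
        simp [Matrix.mul_sub, Matrix.mul_smul],
      Matrix.trace_sub, Matrix.trace_smul, hρΛ]
    simp
  have hDO : (D * O).trace.re = B := by
    have hOΛre : (ρ * (O * Λ)).trace.re = (ρ * (Λ * O)).trace.re := by
      have h1 := star_trace_mul3 hρ.isHermitian hΛ hO
      have := congrArg Complex.re h1
      simpa [Complex.star_def] using this.symm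
    have htr : (D * O).trace = (1 / 2 : ℂ) * ((ρ * (Λ * O)).trace + (ρ * (O * Λ)).trace) := by
      rw [hDdef, Matrix.smul_mul, Matrix.trace_smul, add_mul, Matrix.trace_add,
        Matrix.mul_assoc ρ Λ O,
        show (Λ * ρ * O).trace = (ρ * (O * Λ)).trace by
          rw [Matrix.mul_assoc, Matrix.trace_mul_comm Λ (ρ * O), Matrix.mul_assoc]]
      simp [smul_eq_mul]
    have h2 := congrArg Complex.re htr
    rw [h2, hB, hΛO']
    simp [Complex.mul_re, Complex.add_re, hOΛre]
    ring
  -- identify A with the variance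
  have hAvar : A = (ρ * O ^ 2).trace.re - ((ρ * O).trace.re) ^ 2 := by
    have hO'sq : O' * O' = O * O - (2 * μ) • O + (μ * μ) • 1 := by
      rw [hO'def]
      simp only [Matrix.sub_mul, Matrix.mul_sub, Matrix.smul_mul, Matrix.mul_smul,
        Matrix.one_mul, Matrix.mul_one, smul_smul]
      module
    have htr : (ρ * (O' * O')).trace
        = (ρ * (O * O)).trace - (2 * μ) * (ρ * O).trace + (μ * μ) * ρ.trace := by
      rw [hO'sq]
      simp only [Matrix.mul_sub, Matrix.mul_add, Matrix.mul_smul, Matrix.mul_one,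
        Matrix.trace_sub, Matrix.trace_add, Matrix.trace_smul, smul_eq_mul]
    rw [hρtr, ← hμdef] at htr
    have hμ2 : (ρ * (O' * O')).trace = (ρ * (O * O)).trace - ((μ.re : ℂ)) ^ 2 := by
      have hsq : μ * μ = ((μ.re : ℂ)) ^ 2 := by
        conv_lhs => rw [hμ]
        ring
      rw [htr, mul_one, show (2 : ℂ) * μ * μ = 2 * (μ * μ) by ring, hsq]
      ring
    have h3 := congrArg Complex.re hμ2
    rw [hA, h3, show O ^ 2 = O * O from sq O]
    simp [Complex.sub_re, Complex.ofReal_re]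
    norm_cast
  rw [hDO, ← hAvar, show (ρ * Λ ^ 2).trace.re = C by rw [hC, sq Λ]]
  exact hBsq
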